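/- (Lemma 3.) Let A and P be real N×N matrices, with A symmetric and P a symmetric idempotent (P² = P, Pᵀ = P). Then the matrix powers A^t converge to P as t → ∞ if and only if the following three conditions hold: A·P = P, P·A = P, and ‖A − P‖ < 1, where ‖·‖ is the ℓ² operator norm (spectral norm). -/

import Mathlib

open Matrix Filter

section Aux

variable {N : ℕ}

private noncomputable def eCLM (N : ℕ) :
    Matrix (Fin N) (Fin N) ℝ →ₗ[ℝ] (EuclideanSpace ℝ (Fin N) →L[ℝ] EuclideanSpace ℝ (Fin N)) where
  toFun := Matrix.toEuclideanCLM (𝕜 := ℝ)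
  map_add' x y := map_add _ x y
  map_smul' c x := map_smul _ c x

private noncomputable def eCLMsymm (N : ℕ) :
    (EuclideanSpace ℝ (Fin N) →L[ℝ] EuclideanSpace ℝ (Fin N)) →ₗ[ℝ] Matrix (Fin N) (Fin N) ℝ where
  toFun := (Matrix.toEuclideanCLM (𝕜 := ℝ)).symm
  map_add' x y := map_add _ x y
  map_smul' c x := map_smul _ c x

private lemma pow_sub_eq {A P : Matrix (Fin N) (Fin N) ℝ} (hPidem : P * P = P)
    (hAP : A * P = P) (hPA : P * A = P) : ∀ t : ℕ, (A - P) ^ (t + 1) = A ^ (t + 1) - P := by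
  have hApowP : ∀ k : ℕ, A ^ k * P = P := by
    intro k
    induction k with
    | zero => simp
    | succ k ih => rw [pow_succ, Matrix.mul_assoc, hAP, ih]
  intro t
  induction t with
  | zero => simp
  | succ t ih =>
    rw [pow_succ, ih, Matrix.sub_mul, Matrix.mul_sub, Matrix.mul_sub, hApowP, hPA, hPidem,
      ← pow_succ]
    abel

end Aux

set_option maxHeartbeats 1000000

/-- **Lemma 3 (gossip-matrix convergence condition).**
For a symmetric matrix `A` and a symmetric idempotent `P`, the powers `A ^ t`
converge to `P` as `t → ∞` if and only if `A * P = P`, `P * A = P`, and the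
spectral norm of `A - P` is less than one. -/
theorem gossip_convergence_iff {N : ℕ} (A P : Matrix (Fin N) (Fin N) ℝ)
    (hAsymm : Aᵀ = A) (hPsymm : Pᵀ = P) (hPidem : P * P = P) :
    Filter.Tendsto (fun t : ℕ => A ^ t) Filter.atTop (nhds P) ↔
      (A * P = P ∧ P * A = P ∧ ‖Matrix.toEuclideanCLM (𝕜 := ℝ) (A - P)‖ < 1) := by
  have hcont : Continuous (fun M : Matrix (Fin N) (Fin N) ℝ =>
      Matrix.toEuclideanCLM (𝕜 := ℝ) M) := (eCLM N).continuous_of_finiteDimensional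
  have hcont' : Continuous (fun T : EuclideanSpace ℝ (Fin N) →L[ℝ] EuclideanSpace ℝ (Fin N) =>
      (Matrix.toEuclideanCLM (𝕜 := ℝ)).symm T) := (eCLMsymm N).continuous_of_finiteDimensional
  set T : EuclideanSpace ℝ (Fin N) →L[ℝ] EuclideanSpace ℝ (Fin N) :=
    Matrix.toEuclideanCLM (𝕜 := ℝ) (A - P) with hT
  have hstar : star (A - P) = A - P := by
    rw [Matrix.star_eq_conjTranspose, Matrix.conjTranspose_eq_transpose_of_trivial,
      Matrix.transpose_sub, hAsymm, hPsymm]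
  have hTsa : _root_.IsSelfAdjoint T := by
    rw [_root_.IsSelfAdjoint, hT, ← map_star, hstar]
  constructor
  · intro hconv
    have h1 : Tendsto (fun t : ℕ => A ^ (t + 1)) atTop (nhds P) :=
      hconv.comp (tendsto_add_atTop_nat 1)
    have hAP : A * P = P := by
      have h2 : Tendsto (fun t : ℕ => A * A ^ t) atTop (nhds (A * P)) := hconv.const_mul A
      have h3 : (fun t : ℕ => A * A ^ t) = fun t : ℕ => A ^ (t + 1) := by
        funext t; rw [pow_succ']
      rw [h3] at h2
      exact tendsto_nhds_unique h2 h1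
    have hPA : P * A = P := by
      have h2 : Tendsto (fun t : ℕ => A ^ t * A) atTop (nhds (P * A)) := hconv.mul_const A
      have h3 : (fun t : ℕ => A ^ t * A) = fun t : ℕ => A ^ (t + 1) := by
        funext t; rw [pow_succ]
      rw [h3] at h2
      exact tendsto_nhds_unique h2 (by simpa [mul_comm] using h1)
    refine ⟨hAP, hPA, ?_⟩
    -- (A - P)^(t+1) → 0
    have hsub : Tendsto (fun t : ℕ => (A - P) ^ (t + 1)) atTop (nhds 0) := by
      have : Tendsto (fun t : ℕ => A ^ (t + 1) - P) atTop (nhds (P - P)) := h1.sub tendsto_const_nhds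
      rw [sub_self] at this
      refine this.congr fun t => (pow_sub_eq hPidem hAP hPA t).symm
    have hTpow : Tendsto (fun t : ℕ => T ^ (t + 1)) atTop (nhds 0) := by
      have := (hcont.tendsto 0).comp hsub
      simp only [map_zero] at this
      refine this.congr fun t => ?_
      simp only [Function.comp_apply, hT, map_pow]
    -- extract along 2^n
    by_contra hlt
    push_neg at hlt
    have h2n : Tendsto (fun n : ℕ => T ^ 2 ^ n) atTop (nhds 0) := by
      have hmono : Tendsto (fun n : ℕ => 2 ^ n - 1) atTop atTop := by
        apply tendsto_atTop_atTop.mpr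
        intro b
        exact ⟨b + 1, fun a ha => by
          have : a + 1 ≤ 2 ^ a := Nat.succ_le_of_lt (Nat.lt_two_pow_self (n := a))
          omega⟩
      have := hTpow.comp hmono
      refine this.congr fun n => ?_
      simp only [Function.comp_apply]
      congr 1
      have : 1 ≤ 2 ^ n := Nat.one_le_two_pow
      omega
    have hknorm : ∀ n : ℕ, ‖T ^ 2 ^ n‖ = ‖T‖ ^ 2 ^ n := fun n => by
      have h := IsSelfAdjoint.nnnorm_pow_two_pow (x := T) hTsa n
      calc ‖T ^ 2 ^ n‖ = ((‖T ^ 2 ^ n‖₊ : ℝ)) := (coe_nnnorm _).symm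
        _ = ((‖T‖₊ ^ 2 ^ n : NNReal) : ℝ) := by rw [h]
        _ = ‖T‖ ^ 2 ^ n := by push_cast; ring
    have hnorm : Tendsto (fun n : ℕ => ‖T‖ ^ 2 ^ n) atTop (nhds 0) := by
      have h := h2n.norm
      simp only [norm_zero] at h
      exact h.congr fun n => hknorm n
    have : (1 : ℝ) ≤ 0 := ge_of_tendsto hnorm (by
      filter_upwards with n
      exact one_le_pow₀ hlt)
    linarith
  · rintro ⟨hAP, hPA, hnorm⟩
    have hTpow : Tendsto (fun t : ℕ => T ^ t) atTop (nhds 0) := by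
      apply tendsto_pow_atTop_nhds_zero_of_norm_lt_one hnorm
    have hback : Tendsto (fun t : ℕ => (A - P) ^ t) atTop (nhds 0) := by
      have := (hcont'.tendsto 0).comp hTpow
      simp only [Function.comp_apply, map_zero] at this
      refine this.congr fun t => ?_
      simp only [Function.comp_apply, hT]
      rw [← map_pow, StarAlgEquiv.symm_apply_apply]
    have h1 : Tendsto (fun t : ℕ => (A - P) ^ (t + 1) + P) atTop (nhds P) := by
      have := (hback.comp (tendsto_add_atTop_nat 1)).add (tendsto_const_nhds (x := P))
      simpa using this
    have h2 : Tendsto (fun t : ℕ => A ^ (t + 1)) atTop (nhds P) := by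
      refine h1.congr fun t => ?_
      rw [pow_sub_eq hPidem hAP hPA t]
      abel
    have := h2.comp (tendsto_sub_atTop_nat 1)
    refine (Tendsto.congr' ?_ this)
    filter_upwards [eventually_ge_atTop 1] with t ht
    simp only [Function.comp_apply]
    congr 1
    omega
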